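/- Let n ≥ 6, let L be a 3-uniform list assignment of the prism graph Π_n in which all vertices receive the same list, and let c be a lex-min proper L-coloring of Π_n. Then every color class of c contains at most ⌈2n/3⌉ vertices. -/

import Mathlib

/-- The prism graph `Π_n = C_n □ K_2`, on vertex set `Fin n × Fin 2`:
`(i,j)` is adjacent to `(i',j')` iff `i = i'` and `j ≠ j'`, or `j = j'` and
`i' − i ≡ ±1 (mod n)`. -/
def prism (n : ℕ) : SimpleGraph (Fin n × Fin 2) :=
  SimpleGraph.fromRel (fun v w =>
    (v.1 = w.1 ∧ v.2 ≠ w.2) ∨ (v.2 = w.2 ∧ w.1.val = (v.1.val + 1) % n))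

/-- `c` is a proper `L`-coloring of the prism graph `Π_n`. -/
def IsProperListColoring {n : ℕ} (L : Fin n × Fin 2 → Finset ℕ)
    (c : Fin n × Fin 2 → ℕ) : Prop :=
  (∀ v, c v ∈ L v) ∧ ∀ v w, (prism n).Adj v w → c v ≠ c w

/-- The color class of color `k` under the coloring `c`. -/
def colorClass {n : ℕ} (c : Fin n × Fin 2 → ℕ) (k : ℕ) : Finset (Fin n × Fin 2) :=
  Finset.univ.filter (fun v => c v = k)

/-- The color word of `c`: the sizes of the nonempty color classes of `c`,
listed in decreasing order. -/
def colorWord {n : ℕ} (c : Fin n × Fin 2 → ℕ) : List ℕ :=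
  (((Finset.univ.image c).val.map (fun k => (colorClass c k).card)).sort (· ≤ ·)).reverse

/-- `c` is a lex-min proper `L`-coloring: it is a proper `L`-coloring and no proper
`L`-coloring has a lexicographically smaller color word. -/
def IsLexMin {n : ℕ} (L : Fin n × Fin 2 → Finset ℕ) (c : Fin n × Fin 2 → ℕ) : Prop :=
  IsProperListColoring L c ∧
    ∀ c', IsProperListColoring L c' → ¬ List.Lex (· < ·) (colorWord c') (colorWord c)


def pat (n i : ℕ) : ℕ := i % 3 + if 3 * (n / 3) ≤ i then 1 else 0

def col3 (a b c t : ℕ) : ℕ := if t % 3 = 0 then a else if t % 3 = 1 then b else c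

lemma col3_eq_iff {a b c : ℕ} (hab : a ≠ b) (hac : a ≠ c) (hbc : b ≠ c) (x y : ℕ) :
    col3 a b c x = col3 a b c y ↔ x % 3 = y % 3 := by
  unfold col3; split_ifs <;> omega

lemma pat_lt (n i : ℕ) (hi : i < n) : pat n i < 3 := by
  unfold pat; split_ifs <;> omega

lemma pat_step (n i i' : ℕ) (hi : i < n) (hi' : i' < n) (hn : 6 ≤ n)
    (h : (i + 1) % n = i') : pat n i % 3 ≠ pat n i' % 3 := by
  have hcase : i' = i + 1 ∨ (i + 1 = n ∧ i' = 0) := by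
    rcases lt_or_ge (i + 1) n with h1 | h1
    · rw [Nat.mod_eq_of_lt h1] at h; omega
    · have h2 : i + 1 = n := by omega
      rw [h2, Nat.mod_self] at h; omega
  rcases hcase with rfl | ⟨h1, rfl⟩ <;> (unfold pat; split_ifs <;> omega)

lemma count_le (n : ℕ) (hn : 6 ≤ n) (t : ℕ) :
    (Finset.univ.filter
      (fun v : Fin n × Fin 2 => (pat n v.1.val + v.2.val) % 3 = t % 3)).card ≤ n - n / 3 := by
  set t' := (t + 1) % 3 with ht'
  have ht3 : t' < 3 := Nat.mod_lt _ (by omega)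
  have h1 : (Finset.univ.filter
      (fun v : Fin n × Fin 2 => (pat n v.1.val + v.2.val) % 3 = t % 3)).card
      ≤ (Finset.univ.filter (fun i : Fin n => ¬ pat n i.val = t')).card := by
    apply Finset.card_le_card_of_injOn Prod.fst
    · intro v hv
      simp only [Finset.mem_coe, Finset.mem_filter, Finset.mem_univ, true_and] at hv ⊢
      have h2 := pat_lt n v.1.val v.1.isLt
      have h3 := v.2.isLt
      omega
    · intro v hv w hw hvw
      simp only [Finset.coe_filter, Set.mem_setOf_eq, Finset.mem_univ, true_and] at hv hw
      have h2 := v.2.isLt; have h3 := w.2.isLt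
      rw [hvw] at hv
      have h4 : v.2.val = w.2.val := by omega
      exact Prod.ext hvw (Fin.ext h4)
  have h4 : (Finset.univ.filter (fun i : Fin n => pat n i.val = t')).card
      + (Finset.univ.filter (fun i : Fin n => ¬ pat n i.val = t')).card = n := by
    rw [Finset.card_filter_add_card_filter_not, Finset.card_univ, Fintype.card_fin]
  have h5 : n / 3 ≤ (Finset.univ.filter (fun i : Fin n => pat n i.val = t')).card := by
    have h6 := Finset.card_le_card_of_injOn
      (f := fun q : ℕ => (⟨(3 * q + t') % n, Nat.mod_lt _ (by omega)⟩ : Fin n))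
      (s := Finset.range (n / 3))
      (t := Finset.univ.filter (fun i : Fin n => pat n i.val = t'))
      (by
        intro q hq
        simp only [Finset.mem_coe, Finset.mem_range] at hq
        have hlt : 3 * q + t' < n := by omega
        simp only [Finset.mem_coe, Finset.mem_filter, Finset.mem_univ, true_and]
        show pat n ((3 * q + t') % n) = t'
        rw [Nat.mod_eq_of_lt hlt]
        unfold pat; split_ifs <;> omega)
      (by
        intro q hq q' hq' hqq
        simp only [Finset.coe_range, Set.mem_Iio] at hq hq'
        have e := congrArg Fin.val hqq
        simp only at e
        rw [Nat.mod_eq_of_lt (by omega), Nat.mod_eq_of_lt (by omega)] at e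
        omega)
    simpa using h6
  omega

lemma mem_le_rev_head {l : List ℕ} (hl : l.Pairwise (· ≤ ·)) {x y : ℕ} {t : List ℕ}
    (hx : x ∈ l) (h : l.reverse = y :: t) : x ≤ y := by
  have h2 : l.reverse.Pairwise (fun a b => b ≤ a) := List.pairwise_reverse.mpr hl
  rw [h] at h2
  have hx' : x ∈ l.reverse := List.mem_reverse.mpr hx
  rw [h] at hx'
  rcases List.mem_cons.mp hx' with rfl | hx''
  · exact le_refl _
  · exact (List.pairwise_cons.mp h2).1 x hx''

/-- If `n ≥ 6`, `L` is a 3-uniform list assignment of `Π_n` in which all vertices get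
the same list, and `c` is a lex-min proper `L`-coloring, then every color class of `c`
has at most `⌈2n/3⌉` vertices. -/
theorem lexmin_constant_lists_bounded (n : ℕ) (hn : 6 ≤ n)
    (L : Fin n × Fin 2 → Finset ℕ) (hL : ∀ v, (L v).card = 3)
    (hsame : ∀ v w, L v = L w)
    (c : Fin n × Fin 2 → ℕ) (hc : IsLexMin L c) :
    ∀ k : ℕ, (colorClass c k).card ≤ 2 * n ⌈/⌉ 3 := by
  intro k
  by_contra hcard
  push_neg at hcard
  have hn0 : 0 < n := by omega
  have hB : 2 * n ⌈/⌉ 3 = n - n / 3 := by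
    rw [Nat.ceilDiv_eq_add_pred_div]; omega
  set v0 : Fin n × Fin 2 := (⟨0, hn0⟩, 0) with hv0
  obtain ⟨a, b, c0, hab, hac, hbc, hS⟩ := Finset.card_eq_three.mp (hL v0)
  set c' : Fin n × Fin 2 → ℕ := fun v => col3 a b c0 (pat n v.1.val + v.2.val) with hc'
  have hproper : IsProperListColoring L c' := by
    constructor
    · intro v
      rw [hsame v v0, hS]
      simp only [hc', col3]
      split_ifs <;> simp
    · intro v w hadj
      rw [prism, SimpleGraph.fromRel_adj] at hadj
      obtain ⟨hne, hrel⟩ := hadj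
      have hv2 := v.2.isLt; have hw2 := w.2.isLt
      have hpv := pat_lt n v.1.val v.1.isLt
      have hpw := pat_lt n w.1.val w.1.isLt
      simp only [hc', Ne, col3_eq_iff hab hac hbc]
      rcases hrel with (⟨h1, h2⟩ | ⟨h1, h2⟩) | (⟨h1, h2⟩ | ⟨h1, h2⟩)
      · have h3 : v.2.val ≠ w.2.val := fun e => h2 (Fin.ext e)
        rw [h1]; omega
      · have h3 := pat_step n v.1.val w.1.val v.1.isLt w.1.isLt hn h2.symm
        rw [h1]; omega
      · have h3 : v.2.val ≠ w.2.val := fun e => h2 (Fin.ext e.symm)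
        rw [h1]; omega
      · have h3 := pat_step n w.1.val v.1.val w.1.isLt v.1.isLt hn h2.symm
        rw [h1]; omega
  have hbound : ∀ y ∈ colorWord c', y ≤ n - n / 3 := by
    intro y hy
    unfold colorWord at hy
    rw [List.mem_reverse, Multiset.mem_sort, Multiset.mem_map] at hy
    obtain ⟨k', hk', rfl⟩ := hy
    rw [Finset.mem_val, Finset.mem_image] at hk'
    obtain ⟨v, -, rfl⟩ := hk'
    have heq : colorClass c' (c' v) = Finset.univ.filter
        (fun w : Fin n × Fin 2 => (pat n w.1.val + w.2.val) % 3
          = (pat n v.1.val + v.2.val) % 3) := by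
      unfold colorClass
      apply Finset.filter_congr
      intro w _
      simp only [hc']
      exact col3_eq_iff hab hac hbc _ _
    rw [heq]
    exact count_le n hn _
  have hkmem : k ∈ Finset.univ.image c := by
    have hpos : 0 < (colorClass c k).card := by omega
    obtain ⟨v, hv⟩ := Finset.card_pos.mp hpos
    rw [colorClass, Finset.mem_filter] at hv
    exact Finset.mem_image.mpr ⟨v, Finset.mem_univ v, hv.2⟩
  have hymem : (colorClass c k).card ∈
      (((Finset.univ.image c).val.map (fun k => (colorClass c k).card)).sort (· ≤ ·)) := by
    rw [Multiset.mem_sort, Multiset.mem_map]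
    exact ⟨k, Finset.mem_val.mpr hkmem, rfl⟩
  obtain ⟨hW, tW, hWeq⟩ : ∃ h t, colorWord c = h :: t := by
    cases hcw : colorWord c with
    | nil =>
      exfalso
      have : (colorClass c k).card ∈ colorWord c := by
        unfold colorWord
        rw [List.mem_reverse]
        exact hymem
      rw [hcw] at this
      exact List.not_mem_nil this
    | cons h t => exact ⟨h, t, rfl⟩
  have hheads : (colorClass c k).card ≤ hW := by
    have hsorted := Multiset.pairwise_sort
      (((Finset.univ.image c).val.map (fun k => (colorClass c k).card))) (· ≤ ·)
    exact mem_le_rev_head hsorted hymem hWeq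
  apply hc.2 c' hproper
  rw [hWeq]
  cases hcw' : colorWord c' with
  | nil => exact List.Lex.nil
  | cons x t' =>
    apply List.Lex.rel
    have hx : x ∈ colorWord c' := by rw [hcw']; exact List.mem_cons_self
    have h5 := hbound x hx
    omega
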